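/- Let N ≥ 4, a = N-3, u(z) = 1/(2N) - a z/2, and f(z) = 2u(z) ln u(z) + a z ln z + (2e/(e+1))(ln N)/N. Then the minimum of f on [0, 1/(N(N-3))] is attained at z = 1/(N(N-1)) and equals (1/N)[((e-1)/(e+1)) ln N - ln(N-1)], which is strictly negative for all N ≥ 4. -/

import Mathlib

open Real Set

theorem f_min_negative (N : ℕ) (hN : 4 ≤ N)
    (f : ℝ → ℝ)
    (hf : f = fun z => 2 * (1 / (2 * (N : ℝ)) - ((N : ℝ) - 3) * z / 2)
        * Real.log (1 / (2 * (N : ℝ)) - ((N : ℝ) - 3) * z / 2)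
      + ((N : ℝ) - 3) * z * Real.log z
      + (2 * Real.exp 1 / (Real.exp 1 + 1)) * Real.log N / N) :
    (∀ z ∈ Set.Icc (0 : ℝ) (1 / ((N : ℝ) * ((N : ℝ) - 3))),
      f (1 / ((N : ℝ) * ((N : ℝ) - 1))) ≤ f z) ∧
    f (1 / ((N : ℝ) * ((N : ℝ) - 1)))
      = (1 / (N : ℝ)) * (((Real.exp 1 - 1) / (Real.exp 1 + 1)) * Real.log N
        - Real.log ((N : ℝ) - 1)) ∧
    f (1 / ((N : ℝ) * ((N : ℝ) - 1))) < 0 := by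
  have hn : (4:ℝ) ≤ (N:ℝ) := by exact_mod_cast hN
  set n : ℝ := (N:ℝ) with hn_def
  have hn0 : (0:ℝ) < n := by linarith
  have ha0 : (0:ℝ) < n - 3 := by linarith
  have hn1 : (0:ℝ) < n - 1 := by linarith
  set zs : ℝ := 1/(n*(n-1)) with hzs
  set b : ℝ := 1/(n*(n-3)) with hb
  have hzs0 : 0 < zs := by rw [hzs]; positivity
  have hzsb : zs < b := by
    rw [hzs, hb]
    exact one_div_lt_one_div_of_lt (by positivity) (by nlinarith)
  -- u and its facts
  set u : ℝ → ℝ := fun z => 1/(2*n) - (n-3)*z/2 with hu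
  have hu_pos : ∀ z : ℝ, z < b → 0 < u z := by
    intro z hz
    have h2 : (n-3) * b = 1/n := by rw [hb]; field_simp
    have h1 : (n-3) * z < 1/n := by rw [← h2]; nlinarith
    show 0 < 1/(2*n) - (n-3)*z/2
    have h3 : 1/(2*n) = (1/n)/2 := by ring
    linarith
  have huzs : u zs = zs := by
    show 1/(2*n) - (n-3)*zs/2 = zs
    rw [hzs]; field_simp; ring
  -- rewrite f
  have hf' : f = fun z => 2 * u z * Real.log (u z) + (n-3) * z * Real.log z
      + (2 * Real.exp 1 / (Real.exp 1 + 1)) * Real.log n / n := by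
    rw [hf]
  -- continuity
  have hcont : Continuous f := by
    rw [hf']
    have c1 : Continuous u := by rw [hu]; fun_prop
    have c2 : Continuous fun z => (u z) * Real.log (u z) :=
      Real.continuous_mul_log.comp c1
    have c3 : Continuous fun z : ℝ => z * Real.log z := Real.continuous_mul_log
    have heq : (fun z => 2 * u z * Real.log (u z) + (n-3) * z * Real.log z
        + (2 * Real.exp 1 / (Real.exp 1 + 1)) * Real.log n / n)
        = fun z => 2 * ((u z) * Real.log (u z)) + (n-3) * (z * Real.log z)
        + (2 * Real.exp 1 / (Real.exp 1 + 1)) * Real.log n / n := by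
      funext z; ring
    rw [heq]
    exact ((continuous_const.mul c2).add (continuous_const.mul c3)).add continuous_const
  -- derivative
  have hderiv : ∀ z : ℝ, 0 < z → z < b →
      HasDerivAt f ((n-3) * (Real.log z - Real.log (u z))) z := by
    intro z hz hzb
    have huz : 0 < u z := hu_pos z hzb
    have h1 : HasDerivAt u (-((n-3) * 1 / 2)) z := by
      rw [hu]
      exact ((((hasDerivAt_id z).const_mul (n-3)).div_const 2).const_sub (1/(2*n)))
    have t1 := h1.const_mul 2
    have t2 := (Real.hasDerivAt_log huz.ne').comp z h1
    have term1 := t1.mul t2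
    have t3 : HasDerivAt (fun z : ℝ => (n-3) * z) ((n-3) * 1) z :=
      (hasDerivAt_id z).const_mul (n-3)
    have t4 : HasDerivAt Real.log z⁻¹ z := Real.hasDerivAt_log hz.ne'
    have term2 := t3.mul t4
    have total := (term1.add term2).add_const
      ((2 * Real.exp 1 / (Real.exp 1 + 1)) * Real.log n / n)
    rw [hf']
    refine total.congr_deriv ?_
    simp only [Function.comp_apply]
    field_simp
    ring
  -- key sign identity
  have hkey : ∀ z : ℝ, u z - z = ((n-1)/2) * (zs - z) := by
    intro z
    show 1/(2*n) - (n-3)*z/2 - z = ((n-1)/2) * (zs - z)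
    rw [hzs]; field_simp; ring
  -- strict antitone on [0, zs]
  have hanti : StrictAntiOn f (Icc 0 zs) := by
    apply strictAntiOn_of_deriv_neg (convex_Icc 0 zs) hcont.continuousOn
    intro z hz
    rw [interior_Icc] at hz
    have hzb : z < b := lt_trans hz.2 hzsb
    have hzu : z < u z := by
      have hp : 0 < ((n-1)/2) * (zs - z) :=
        mul_pos (by linarith) (by linarith [hz.2])
      have h2 : 0 < u z - z := (hkey z) ▸ hp
      linarith
    rw [(hderiv z hz.1 hzb).deriv]
    have hl : Real.log z < Real.log (u z) := Real.log_lt_log hz.1 hzu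
    exact mul_neg_of_pos_of_neg ha0 (by linarith)
  -- strict monotone on [zs, b]
  have hmono : StrictMonoOn f (Icc zs b) := by
    apply strictMonoOn_of_deriv_pos (convex_Icc zs b) hcont.continuousOn
    intro z hz
    rw [interior_Icc] at hz
    have hz0 : 0 < z := lt_trans hzs0 hz.1
    have hzu : u z < z := by
      have hp : ((n-1)/2) * (zs - z) < 0 :=
        mul_neg_of_pos_of_neg (by linarith) (by linarith [hz.1])
      have h2 : u z - z < 0 := (hkey z) ▸ hp
      linarith
    have huz : 0 < u z := hu_pos z hz.2
    rw [(hderiv z hz0 hz.2).deriv]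
    have hl : Real.log (u z) < Real.log z := Real.log_lt_log huz hzu
    exact mul_pos ha0 (by linarith)
  -- minimality
  have hmin : ∀ z ∈ Set.Icc (0:ℝ) b, f zs ≤ f z := by
    intro z hz
    rcases le_total z zs with h | h
    · rcases eq_or_lt_of_le h with rfl | hlt
      · exact le_rfl
      · exact (hanti ⟨hz.1, h⟩ ⟨hzs0.le, le_rfl⟩ hlt).le
    · rcases eq_or_lt_of_le h with rfl | hlt
      · exact le_rfl
      · exact (hmono ⟨le_rfl, hzsb.le⟩ ⟨h, hz.2⟩ hlt).le
  -- value
  have hlogzs : Real.log zs = -(Real.log n + Real.log (n-1)) := by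
    rw [hzs, one_div, Real.log_inv, Real.log_mul hn0.ne' hn1.ne']
  have he1 : Real.exp 1 + 1 ≠ 0 := by positivity
  have hval : f zs = (1/n) * (((Real.exp 1 - 1) / (Real.exp 1 + 1)) * Real.log n
      - Real.log (n-1)) := by
    have e1 : f zs = 2 * zs * Real.log zs + (n-3) * zs * Real.log zs
        + (2 * Real.exp 1 / (Real.exp 1 + 1)) * Real.log n / n := by
      rw [hf']
      show 2 * u zs * Real.log (u zs) + (n-3) * zs * Real.log zs + _ = _
      rw [huzs]
    rw [e1, hlogzs]
    have key : ∀ L M E : ℝ, E + 1 ≠ 0 →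
        2 * (1/(n*(n-1))) * (-(L+M)) + (n-3) * (1/(n*(n-1))) * (-(L+M))
          + 2*E/(E+1)*L/n = (1/n)*((E-1)/(E+1)*L - M) := by
      intro L M E hE
      field_simp
      ring
    rw [hzs]
    exact key _ _ _ he1
  refine ⟨hmin, hval, ?_⟩
  rw [hval]
  have he3 : Real.exp 1 < 3 := by
    have := Real.exp_one_lt_d9; linarith
  have hfrac : (Real.exp 1 - 1) / (Real.exp 1 + 1) < 1/2 := by
    rw [div_lt_div_iff₀ (by positivity) (by norm_num)]; linarith
  have hlogn : 0 < Real.log n := Real.log_pos (by linarith)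
  have hle : Real.log n ≤ 2 * Real.log (n-1) := by
    have h1 : n ≤ (n-1)^2 := by nlinarith
    have h2 : Real.log n ≤ Real.log ((n-1)^2) := Real.log_le_log hn0 h1
    rwa [Real.log_pow, Nat.cast_ofNat] at h2
  have hneg : ((Real.exp 1 - 1) / (Real.exp 1 + 1)) * Real.log n - Real.log (n-1) < 0 := by
    nlinarith [mul_lt_mul_of_pos_right hfrac hlogn]
  exact mul_neg_of_pos_of_neg (by positivity) hneg
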